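/- For every parameter vector θ, every layer ℓ = 1,…,L, every original unit index j = 1,…,H_ℓ, and every input x ∈ ℝ^n, the pre-activations of the original units are unchanged under both the β and the γ embeddings: â_j^ℓ(x, β_{ζs}(θ)) = â_j^ℓ(x, γ_λ(θ)) = a_j^ℓ(x, θ). -/
import Mathlib


/-- Parameters of a fully connected feedforward network: `w ℓ j i` is the weight from
unit `i` of layer `ℓ-1` to unit `j` of layer `ℓ`, and `b ℓ j` is the bias of unit `j`
of layer `ℓ`.  Layers are numbered `1, …, L` (layer `0` is the input); units within a
layer are numbered from `0`, so layer `ℓ` consists of the units `0, …, H ℓ - 1`. -/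
structure NNParams where
  w : ℕ → ℕ → ℕ → ℝ
  b : ℕ → ℕ → ℝ

/-- `layerOut g H θ x ℓ i` : the output of unit `i` of layer `ℓ` on input `x`
(`layerOut g H θ x 0 = x`, and for `ℓ ≥ 1` it is `g` applied to the pre-activation). -/
noncomputable def layerOut (g : ℝ → ℝ) (H : ℕ → ℕ) (θ : NNParams) (x : ℕ → ℝ) :
    ℕ → ℕ → ℝ
  | 0, i => x i
  | ℓ + 1, i =>
      g (∑ j ∈ Finset.range (H ℓ), θ.w (ℓ + 1) i j * layerOut g H θ x ℓ j + θ.b (ℓ + 1) i)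

/-- Pre-activation `a_j^ℓ(x, θ)` of unit `j` of layer `ℓ ≥ 1`:
`a_j^ℓ = ∑_{i < H (ℓ-1)} w_{ji}^ℓ · (output of unit i of layer ℓ-1) + σ_j^ℓ`.
The outputs of the last layer `L` are `f_r(x,θ) = preact g H θ x L r` (linear output units). -/
noncomputable def preact (g : ℝ → ℝ) (H : ℕ → ℕ) (θ : NNParams) (x : ℕ → ℝ)
    (ℓ j : ℕ) : ℝ :=
  ∑ i ∈ Finset.range (H (ℓ - 1)), θ.w ℓ j i * layerOut g H θ x (ℓ - 1) i + θ.b ℓ j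

/-- Empirical risk `R_emp(θ) = (1/P) ∑_{p<P} ℒ(y^p, f(x^p, θ))`, where the network has
`L` layers with layer sizes given by `H`, the training inputs are `X p` and the labels
`Y p`, and `m` is the output dimension seen by the loss. -/
noncomputable def Remp (g : ℝ → ℝ) (H : ℕ → ℕ) (L P : ℕ) {m : ℕ}
    (X Y : ℕ → ℕ → ℝ) (loss : (ℕ → ℝ) → (Fin m → ℝ) → ℝ) (θ : NNParams) : ℝ :=
  (1 / (P : ℝ)) * ∑ p ∈ Finset.range P,
    loss (Y p) (fun r => preact g H θ (X p) L r)

/-- Layer sizes of the network enlarged by adding `K` new neurons to layer `l`. -/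
def enlargeH (H : ℕ → ℕ) (l K : ℕ) : ℕ → ℕ :=
  fun ℓ => if ℓ = l then H l + K else H ℓ

/-- The embedding `α_{ζv}` : copy all parameters, give the `k`-th new neuron of layer `l`
(`k = 0, …, K-1`, i.e. unit `H l + k`) the bias `ζ k` and incoming weights `v k`, and
set all weights from the new neurons to layer `l+1` to zero. -/
noncomputable def alphaEmb (H : ℕ → ℕ) (l K : ℕ) (ζ : ℕ → ℝ) (v : ℕ → ℕ → ℝ)
    (θ : NNParams) : NNParams where
  w := fun ℓ j i =>
    if ℓ = l ∧ H l ≤ j then v (j - H l) i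
    else if ℓ = l + 1 ∧ H l ≤ i then 0
    else θ.w ℓ j i
  b := fun ℓ j => if ℓ = l ∧ H l ≤ j then ζ (j - H l) else θ.b ℓ j

/-- The embedding `β_{ζs}` : copy all parameters except the biases of layer `l+1`, give
the `k`-th new neuron of layer `l` the bias `ζ k` and zero incoming weights, set the
outgoing weight from the `k`-th new neuron to unit `j` of layer `l+1` to `s j k`, and
replace the bias of unit `j` of layer `l+1` by `σ_j - ∑_{k<K} s j k · g (ζ k)`. -/
noncomputable def betaEmb (g : ℝ → ℝ) (H : ℕ → ℕ) (l K : ℕ) (ζ : ℕ → ℝ)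
    (s : ℕ → ℕ → ℝ) (θ : NNParams) : NNParams where
  w := fun ℓ j i =>
    if ℓ = l ∧ H l ≤ j then 0
    else if ℓ = l + 1 ∧ H l ≤ i then s j (i - H l)
    else θ.w ℓ j i
  b := fun ℓ j =>
    if ℓ = l ∧ H l ≤ j then ζ (j - H l)
    else if ℓ = l + 1 then θ.b (l + 1) j - ∑ k ∈ Finset.range K, s j k * g (ζ k)
    else θ.b ℓ j

/-- The embedding `γ_λ` : duplicate unit `h` of layer `l` into each of the `K` new
neurons (same bias and incoming weights as unit `h`), and split the outgoing weights:
unit `h` keeps `lam 0 · w_{jh}^{l+1}` and the `k`-th new neuron (`k = 0, …, K-1`,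
i.e. unit `H l + k`, corresponding to `λ_{k+1}` of the paper) gets
`lam (k+1) · w_{jh}^{l+1}`; all other parameters are copied. -/
noncomputable def gammaEmb (H : ℕ → ℕ) (l K : ℕ) (h : ℕ) (lam : ℕ → ℝ)
    (θ : NNParams) : NNParams where
  w := fun ℓ j i =>
    if ℓ = l ∧ H l ≤ j then θ.w l h i
    else if ℓ = l + 1 ∧ i = h then lam 0 * θ.w (l + 1) j h
    else if ℓ = l + 1 ∧ H l ≤ i then lam (i - H l + 1) * θ.w (l + 1) j h
    else θ.w ℓ j i
  b := fun ℓ j => if ℓ = l ∧ H l ≤ j then θ.b l h else θ.b ℓ j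

/-- `θ` with the single weight `w ℓ j i` replaced by `t`. -/
noncomputable def updW (θ : NNParams) (ℓ j i : ℕ) (t : ℝ) : NNParams :=
  ⟨fun ℓ' j' i' => if ℓ' = ℓ ∧ j' = j ∧ i' = i then t else θ.w ℓ' j' i', θ.b⟩

/-- `θ` with the single bias `b ℓ j` replaced by `t`. -/
noncomputable def updB (θ : NNParams) (ℓ j : ℕ) (t : ℝ) : NNParams :=
  ⟨θ.w, fun ℓ' j' => if ℓ' = ℓ ∧ j' = j then t else θ.b ℓ' j'⟩

/-- `∇ R_emp(θ) = 0` : every partial derivative of the empirical risk with respect to an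
actual network parameter (a weight `w ℓ j i` or a bias `b ℓ j`, `1 ≤ ℓ ≤ L`, `j < H ℓ`,
`i < H (ℓ-1)`) vanishes at `θ`. -/
def IsCritical (g : ℝ → ℝ) (H : ℕ → ℕ) (L P : ℕ) {m : ℕ}
    (X Y : ℕ → ℕ → ℝ) (loss : (ℕ → ℝ) → (Fin m → ℝ) → ℝ) (θ : NNParams) : Prop :=
  (∀ ℓ j i, 1 ≤ ℓ → ℓ ≤ L → j < H ℓ → i < H (ℓ - 1) →
      deriv (fun t => Remp g H L P X Y loss (updW θ ℓ j i t)) (θ.w ℓ j i) = 0) ∧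
  ∀ ℓ j, 1 ≤ ℓ → ℓ ≤ L → j < H ℓ →
      deriv (fun t => Remp g H L P X Y loss (updB θ ℓ j t)) (θ.b ℓ j) = 0

/-- Layer sizes after enlarging layer `p.1` by `p.2` neurons for each pair in the list. -/
def multiEnlargeH : (ℕ → ℕ) → List (ℕ × ℕ) → (ℕ → ℕ)
  | H, [] => H
  | H, (l, K) :: rest => multiEnlargeH (enlargeH H l K) rest

/-- Composition of `α` embeddings: for each `(l, K)` in the list (in order), add `K` new
neurons to layer `l` via `α` with biases `ζ l` and incoming weights `v l`. -/
noncomputable def multiAlpha (ζ : ℕ → ℕ → ℝ) (v : ℕ → ℕ → ℕ → ℝ) :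
    (ℕ → ℕ) → List (ℕ × ℕ) → NNParams → NNParams
  | _, [], θ => θ
  | H, (l, K) :: rest, θ =>
      multiAlpha ζ v (enlargeH H l K) rest (alphaEmb H l K (ζ l) (v l) θ)

noncomputable def multiBeta (g : ℝ → ℝ) (ζ : ℕ → ℕ → ℝ) (s : ℕ → ℕ → ℕ → ℝ) :
    (ℕ → ℕ) → List (ℕ × ℕ) → NNParams → NNParams
  | _, [], θ => θ
  | H, (l, K) :: rest, θ =>
      multiBeta g ζ s (enlargeH H l K) rest (betaEmb g H l K (ζ l) (s l) θ)

noncomputable def multiGamma (hsel : ℕ → ℕ) (lam : ℕ → ℕ → ℝ) :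
    (ℕ → ℕ) → List (ℕ × ℕ) → NNParams → NNParams
  | _, [], θ => θ
  | H, (l, K) :: rest, θ =>
      multiGamma hsel lam (enlargeH H l K) rest (gammaEmb H l K (hsel l) (lam l) θ)

/-- A single enlargement step: either a `β` embedding with zero outgoing weights, or a
`γ` embedding. -/
inductive EmbStep where
  | beta (l K : ℕ) (ζ : ℕ → ℝ)
  | gamma (l K : ℕ) (h : ℕ) (lam : ℕ → ℝ)

def EmbStep.layer : EmbStep → ℕ
  | .beta l _ _ => l
  | .gamma l _ _ _ => l

def EmbStep.count : EmbStep → ℕ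
  | .beta _ K _ => K
  | .gamma _ K _ _ => K

noncomputable def EmbStep.apply (g : ℝ → ℝ) (H : ℕ → ℕ) (θ : NNParams) : EmbStep → NNParams
  | .beta l K ζ => betaEmb g H l K ζ (fun _ _ => 0) θ
  | .gamma l K h lam => gammaEmb H l K h lam θ

def EmbStep.OK (H : ℕ → ℕ) (L : ℕ) : EmbStep → Prop
  | .beta l _ _ => 1 ≤ l ∧ l + 1 ≤ L
  | .gamma l K h lam => 1 ≤ l ∧ l + 1 ≤ L ∧ h < H l ∧ ∑ i ∈ Finset.range (K + 1), lam i = 1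

noncomputable def applySteps (g : ℝ → ℝ) : (ℕ → ℕ) → List EmbStep → NNParams → NNParams
  | _, [], θ => θ
  | H, st :: rest, θ =>
      applySteps g (enlargeH H st.layer st.count) rest (EmbStep.apply g H θ st)

def stepsH : (ℕ → ℕ) → List EmbStep → (ℕ → ℕ)
  | H, [] => H
  | H, st :: rest => stepsH (enlargeH H st.layer st.count) rest

-- beta presum given layer equality
lemma beta_presum (g : ℝ → ℝ) (H : ℕ → ℕ) (l K : ℕ) (hl1 : 1 ≤ l) (ζ : ℕ → ℝ)
    (s : ℕ → ℕ → ℝ) (θ : NNParams) (x : ℕ → ℝ) (ℓ : ℕ)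
    (hS : ∀ i, layerOut g (enlargeH H l K) (betaEmb g H l K ζ s θ) x ℓ i =
        if ℓ = l ∧ H l ≤ i then g (ζ (i - H l)) else layerOut g H θ x ℓ i)
    (j : ℕ) (hj : ¬(ℓ + 1 = l ∧ H l ≤ j)) :
    (∑ i ∈ Finset.range (enlargeH H l K ℓ),
        (betaEmb g H l K ζ s θ).w (ℓ + 1) j i *
          layerOut g (enlargeH H l K) (betaEmb g H l K ζ s θ) x ℓ i)
      + (betaEmb g H l K ζ s θ).b (ℓ + 1) j =
    (∑ i ∈ Finset.range (H ℓ), θ.w (ℓ + 1) j i * layerOut g H θ x ℓ i) + θ.b (ℓ + 1) j := by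
  by_cases hll : ℓ = l
  · subst hll
    have hH : enlargeH H ℓ K ℓ = H ℓ + K := by simp [enlargeH]
    rw [hH, Finset.sum_range_add]
    have h1 : ∀ i ∈ Finset.range (H ℓ),
        (betaEmb g H ℓ K ζ s θ).w (ℓ + 1) j i *
            layerOut g (enlargeH H ℓ K) (betaEmb g H ℓ K ζ s θ) x ℓ i
          = θ.w (ℓ + 1) j i * layerOut g H θ x ℓ i := by
      intro i hi
      rw [Finset.mem_range] at hi
      rw [hS i]
      simp only [betaEmb]
      rw [if_neg (by omega), if_neg (by omega), if_neg (by omega)]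
    rw [Finset.sum_congr rfl h1]
    have h2 : ∀ k ∈ Finset.range K,
        (betaEmb g H ℓ K ζ s θ).w (ℓ + 1) j (H ℓ + k) *
            layerOut g (enlargeH H ℓ K) (betaEmb g H ℓ K ζ s θ) x ℓ (H ℓ + k)
          = s j k * g (ζ k) := by
      intro k hk
      rw [hS (H ℓ + k), if_pos (by omega)]
      simp only [betaEmb]
      rw [if_neg hj, if_pos (⟨by simp, by omega⟩ : _ ∧ _)]
      simp [Nat.add_sub_cancel_left]
    rw [Finset.sum_congr rfl h2]
    have hb : (betaEmb g H ℓ K ζ s θ).b (ℓ + 1) j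
        = θ.b (ℓ + 1) j - ∑ k ∈ Finset.range K, s j k * g (ζ k) := by
      simp only [betaEmb]
      rw [if_neg (by omega)]; simp
    rw [hb]; ring
  · have hH : enlargeH H l K ℓ = H ℓ := by simp [enlargeH, hll]
    rw [hH]
    have h1 : ∀ i ∈ Finset.range (H ℓ),
        (betaEmb g H l K ζ s θ).w (ℓ + 1) j i *
            layerOut g (enlargeH H l K) (betaEmb g H l K ζ s θ) x ℓ i
          = θ.w (ℓ + 1) j i * layerOut g H θ x ℓ i := by
      intro i hi
      rw [Finset.mem_range] at hi
      rw [hS i, if_neg (by tauto)]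
      simp only [betaEmb]
      rw [if_neg hj, if_neg (by omega)]
    rw [Finset.sum_congr rfl h1]
    have hb : (betaEmb g H l K ζ s θ).b (ℓ + 1) j = θ.b (ℓ + 1) j := by
      simp only [betaEmb]
      rw [if_neg hj, if_neg (by omega)]
    rw [hb]

lemma beta_layerOut (g : ℝ → ℝ) (H : ℕ → ℕ) (l K : ℕ) (hl1 : 1 ≤ l) (ζ : ℕ → ℝ)
    (s : ℕ → ℕ → ℝ) (θ : NNParams) (x : ℕ → ℝ) :
    ∀ ℓ i, layerOut g (enlargeH H l K) (betaEmb g H l K ζ s θ) x ℓ i =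
      if ℓ = l ∧ H l ≤ i then g (ζ (i - H l)) else layerOut g H θ x ℓ i := by
  intro ℓ
  induction ℓ with
  | zero => intro i; rw [if_neg (by omega)]; rfl
  | succ n ih =>
    intro i
    by_cases hc : n + 1 = l ∧ H l ≤ i
    · rw [if_pos hc]
      show g _ = _
      have hw : ∀ k ∈ Finset.range (enlargeH H l K n),
          (betaEmb g H l K ζ s θ).w (n + 1) i k *
            layerOut g (enlargeH H l K) (betaEmb g H l K ζ s θ) x n k = 0 := by
        intro k _
        simp only [betaEmb]
        rw [if_pos (by tauto)]; ring
      rw [Finset.sum_congr rfl hw]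
      have hb : (betaEmb g H l K ζ s θ).b (n + 1) i = ζ (i - H l) := by
        simp only [betaEmb]; rw [if_pos (by tauto)]
      rw [hb]; simp
    · rw [if_neg hc]
      show g _ = g _
      congr 1
      exact beta_presum g H l K hl1 ζ s θ x n ih i hc

lemma gamma_presum (g : ℝ → ℝ) (H : ℕ → ℕ) (l K : ℕ) (hl1 : 1 ≤ l)
    (h : ℕ) (hh : h < H l) (lam : ℕ → ℝ)
    (hlam : ∑ i ∈ Finset.range (K + 1), lam i = 1)
    (θ : NNParams) (x : ℕ → ℝ) (ℓ : ℕ)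
    (hS : ∀ i, layerOut g (enlargeH H l K) (gammaEmb H l K h lam θ) x ℓ i =
        if ℓ = l ∧ H l ≤ i then layerOut g H θ x l h else layerOut g H θ x ℓ i)
    (j : ℕ) (hj : ¬(ℓ + 1 = l ∧ H l ≤ j)) :
    (∑ i ∈ Finset.range (enlargeH H l K ℓ),
        (gammaEmb H l K h lam θ).w (ℓ + 1) j i *
          layerOut g (enlargeH H l K) (gammaEmb H l K h lam θ) x ℓ i)
      + (gammaEmb H l K h lam θ).b (ℓ + 1) j =
    (∑ i ∈ Finset.range (H ℓ), θ.w (ℓ + 1) j i * layerOut g H θ x ℓ i) + θ.b (ℓ + 1) j := by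
  by_cases hll : ℓ = l
  · subst hll
    set c : ℝ := θ.w (ℓ + 1) j h * layerOut g H θ x ℓ h with hc
    have hH : enlargeH H ℓ K ℓ = H ℓ + K := by simp [enlargeH]
    rw [hH, Finset.sum_range_add]
    have h1 : ∀ i ∈ Finset.range (H ℓ),
        (gammaEmb H ℓ K h lam θ).w (ℓ + 1) j i *
            layerOut g (enlargeH H ℓ K) (gammaEmb H ℓ K h lam θ) x ℓ i
          = θ.w (ℓ + 1) j i * layerOut g H θ x ℓ i
            + (if i = h then (lam 0 - 1) * c else 0) := by
      intro i hi
      rw [Finset.mem_range] at hi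
      rw [hS i, if_neg (by omega)]
      simp only [gammaEmb]
      rw [if_neg (by omega)]
      by_cases hih : i = h
      · subst hih
        rw [if_pos (⟨by simp, rfl⟩ : _ ∧ _), if_pos rfl, hc]; ring
      · rw [if_neg (by tauto), if_neg (by omega), if_neg hih]; ring
    rw [Finset.sum_congr rfl h1, Finset.sum_add_distrib, Finset.sum_ite_eq']
    rw [if_pos (Finset.mem_range.mpr hh)]
    have h2 : ∀ k ∈ Finset.range K,
        (gammaEmb H ℓ K h lam θ).w (ℓ + 1) j (H ℓ + k) *
            layerOut g (enlargeH H ℓ K) (gammaEmb H ℓ K h lam θ) x ℓ (H ℓ + k)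
          = lam (k + 1) * c := by
      intro k hk
      rw [hS (H ℓ + k), if_pos (by omega)]
      simp only [gammaEmb]
      rw [if_neg (by omega), if_neg (by omega), if_pos (⟨by simp, by omega⟩ : _ ∧ _)]
      rw [hc, Nat.add_sub_cancel_left]; ring
    rw [Finset.sum_congr rfl h2, ← Finset.sum_mul]
    have h3 : ∑ k ∈ Finset.range K, lam (k + 1) = 1 - lam 0 := by
      rw [Finset.sum_range_succ'] at hlam; linarith
    have hb : (gammaEmb H ℓ K h lam θ).b (ℓ + 1) j = θ.b (ℓ + 1) j := by
      simp only [gammaEmb]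
      rw [if_neg (by omega)]
    rw [hb, h3]; ring
  · have hH : enlargeH H l K ℓ = H ℓ := by simp [enlargeH, hll]
    rw [hH]
    have h1 : ∀ i ∈ Finset.range (H ℓ),
        (gammaEmb H l K h lam θ).w (ℓ + 1) j i *
            layerOut g (enlargeH H l K) (gammaEmb H l K h lam θ) x ℓ i
          = θ.w (ℓ + 1) j i * layerOut g H θ x ℓ i := by
      intro i hi
      rw [Finset.mem_range] at hi
      rw [hS i, if_neg (by tauto)]
      simp only [gammaEmb]
      rw [if_neg hj, if_neg (by rintro ⟨e, _⟩; omega), if_neg (by rintro ⟨e, _⟩; omega)]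
    rw [Finset.sum_congr rfl h1]
    have hb : (gammaEmb H l K h lam θ).b (ℓ + 1) j = θ.b (ℓ + 1) j := by
      simp only [gammaEmb]
      rw [if_neg hj]
    rw [hb]

lemma gamma_layerOut (g : ℝ → ℝ) (H : ℕ → ℕ) (l K : ℕ) (hl1 : 1 ≤ l)
    (h : ℕ) (hh : h < H l) (lam : ℕ → ℝ)
    (hlam : ∑ i ∈ Finset.range (K + 1), lam i = 1)
    (θ : NNParams) (x : ℕ → ℝ) :
    ∀ ℓ i, layerOut g (enlargeH H l K) (gammaEmb H l K h lam θ) x ℓ i =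
      if ℓ = l ∧ H l ≤ i then layerOut g H θ x l h else layerOut g H θ x ℓ i := by
  intro ℓ
  induction ℓ with
  | zero => intro i; rw [if_neg (by omega)]; rfl
  | succ n ih =>
    intro i
    by_cases hc : n + 1 = l ∧ H l ≤ i
    · obtain ⟨hnl, hi⟩ := hc
      subst hnl
      rw [if_pos ⟨rfl, hi⟩]
      show g _ = g _
      congr 1
      have hH : enlargeH H (n + 1) K n = H n := by simp [enlargeH]
      rw [hH]
      have h1 : ∀ i' ∈ Finset.range (H n),
          (gammaEmb H (n + 1) K h lam θ).w (n + 1) i i' *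
              layerOut g (enlargeH H (n + 1) K) (gammaEmb H (n + 1) K h lam θ) x n i'
            = θ.w (n + 1) h i' * layerOut g H θ x n i' := by
        intro i' hi'
        rw [ih i', if_neg (by omega)]
        simp only [gammaEmb]
        rw [if_pos (⟨by simp, hi⟩ : _ ∧ _)]
      rw [Finset.sum_congr rfl h1]
      have hb : (gammaEmb H (n + 1) K h lam θ).b (n + 1) i = θ.b (n + 1) h := by
        simp only [gammaEmb]
        rw [if_pos (⟨by simp, hi⟩ : _ ∧ _)]
      rw [hb]
    · rw [if_neg hc]
      show g _ = g _
      congr 1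
      exact gamma_presum g H l K hl1 h hh lam hlam θ x n ih i hc

/-- For every parameter vector `θ`, every layer `ℓ = 1, …, L`, every
original unit `j < H ℓ` and every input `x`, the pre-activations of the original units
are unchanged under both the `β` and the `γ` embeddings:
`â_j^ℓ(x, β_{ζs}(θ)) = â_j^ℓ(x, γ_λ(θ)) = a_j^ℓ(x, θ)`. -/
theorem beta_gamma_preserve_preact
    (g : ℝ → ℝ) (H : ℕ → ℕ) (L : ℕ)
    (l : ℕ) (hl1 : 1 ≤ l) (hlL : l + 1 ≤ L) (K : ℕ)
    (ζ : ℕ → ℝ) (s : ℕ → ℕ → ℝ)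
    (h : ℕ) (hh : h < H l) (lam : ℕ → ℝ)
    (hlam : ∑ i ∈ Finset.range (K + 1), lam i = 1)
    (θ : NNParams) (x : ℕ → ℝ) :
    ∀ ℓ j, 1 ≤ ℓ → ℓ ≤ L → j < H ℓ →
      preact g (enlargeH H l K) (betaEmb g H l K ζ s θ) x ℓ j = preact g H θ x ℓ j ∧
      preact g (enlargeH H l K) (gammaEmb H l K h lam θ) x ℓ j = preact g H θ x ℓ j := by
  intro ℓ j hℓ1 hℓL hjH
  obtain ⟨n, rfl⟩ : ∃ n, ℓ = n + 1 := ⟨ℓ - 1, by omega⟩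
  have hcond : ¬(n + 1 = l ∧ H l ≤ j) := by
    rintro ⟨e, hle⟩; rw [e] at hjH; omega
  constructor
  · unfold preact
    simp only [Nat.add_sub_cancel]
    exact beta_presum g H l K hl1 ζ s θ x n
      (beta_layerOut g H l K hl1 ζ s θ x n) j hcond
  · unfold preact
    simp only [Nat.add_sub_cancel]
    exact gamma_presum g H l K hl1 h hh lam hlam θ x n
      (gamma_layerOut g H l K hl1 h hh lam hlam θ x n) j hcond
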